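/- Assume g satisfies conditions (A1)–(A4). Then for every w ≥ 0 and every a > 0, g'(w) ≤ g(w)/a + c₃·(g(a·c₃)+1) + 1/a. -/

import Mathlib

open MeasureTheory Real

/-- Conditions (A1)–(A4) on the function `g`. -/
structure GCond (g : ℝ → ℝ) (c₂ c₃ : ℝ) : Prop where
  diff : Differentiable ℝ g
  mono : Monotone g
  zero : g 0 = 0
  sign : ∀ y : ℝ, y ≠ 0 → 0 < y * g y
  c₂pos : 0 < c₂
  subadd : ∀ x y : ℝ, |g (x + y)| ≤ c₂ * (|g x| + |g y| + 1)
  c₃ge : 1 ≤ c₃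
  derivBound : ∀ y : ℝ, |deriv g y| ≤ c₃ * (1 + |g y|) / (1 + |y|)

theorem stmt_9 (g : ℝ → ℝ) (c₂ c₃ : ℝ) (hg : GCond g c₂ c₃) :
    ∀ w a : ℝ, 0 ≤ w → 0 < a →
      deriv g w ≤ g w / a + c₃ * (g (a * c₃) + 1) + 1 / a := by
  intro w a hw ha
  have hc₃ : (1:ℝ) ≤ c₃ := hg.c₃ge
  have hc₃0 : 0 < c₃ := lt_of_lt_of_le one_pos hc₃
  -- g is nonneg on nonneg
  have hgnonneg : ∀ y : ℝ, 0 ≤ y → 0 ≤ g y := by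
    intro y hy
    rcases eq_or_lt_of_le hy with h | h
    · rw [← h, hg.zero]
    · have := hg.sign y (ne_of_gt h)
      nlinarith
  have hgw : 0 ≤ g w := hgnonneg w hw
  have hgac : 0 ≤ g (a * c₃) := hgnonneg _ (le_of_lt (mul_pos ha hc₃0))
  have hkey : deriv g w ≤ c₃ * (1 + g w) / (1 + w) :=
    le_trans (le_abs_self _) (by
      have := hg.derivBound w
      rwa [abs_of_nonneg hw, abs_of_nonneg hgw] at this)
  have h1w : (0:ℝ) < 1 + w := by linarith
  rcases le_or_gt w (a * c₃) with hcase | hcase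
  · -- w ≤ a c₃ : use monotonicity
    have hmono : g w ≤ g (a * c₃) := hg.mono hcase
    have h1 : c₃ * (1 + g w) / (1 + w) ≤ c₃ * (1 + g w) := by
      apply div_le_self (by positivity) (by linarith)
    have h2 : c₃ * (1 + g w) ≤ c₃ * (g (a * c₃) + 1) := by nlinarith
    have h3 : 0 ≤ g w / a := div_nonneg hgw ha.le
    have h4 : 0 < 1 / a := by positivity
    linarith [hkey]
  · -- w > a c₃
    have hac : 0 < a * c₃ := mul_pos ha hc₃0
    have h1 : c₃ * (1 + g w) / (1 + w) ≤ c₃ * (1 + g w) / (a * c₃) := by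
      apply div_le_div_of_nonneg_left (by positivity) hac (by linarith)
    have h2 : c₃ * (1 + g w) / (a * c₃) = (1 + g w) / a := by
      field_simp
    have h3 : (1 + g w) / a = g w / a + 1 / a := by ring
    have h4 : 0 ≤ c₃ * (g (a * c₃) + 1) := by positivity
    rw [h2, h3] at h1
    linarith [hkey]
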